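/- Let A ∈ ℝ^{n×n} be the adjacency matrix of a finite simple graph, D = diag(A𝟙), and for μ = 1 let Z = [[O, I],[I − D, A]] ∈ ℝ^{2n×2n}. Let p_k be the nonbacktracking walk count matrices (p_0 = I, p_1 = A, p_2 = A² − D, p_{k} = A·p_{k−1} + (I − D)·p_{k−2} for k ≥ 3). If (c_k)_{k≥0} are reals such that Σ_{k=0}^∞ c_{k+1} Z^k converges, then Σ_{k=0}^∞ c_k p_k converges and Σ_{k=0}^∞ c_k p_k = [I O]·(Σ_{k=0}^∞ c_{k+1} Z^k)·[A; A² − D] + c_0 I. -/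

import Mathlib

open Matrix

/-- Let `A = G.adjMatrix ℝ`, `D = diag(A𝟙)`, and for `μ = 1` let
`Z = [[O, I],[I − D, A]]`. Let `p` be the nonbacktracking walk count matrices
(`p 0 = I`, `p 1 = A`, `p 2 = A² − D`, `p k = A·p (k−1) + (I − D)·p (k−2)` for `k ≥ 3`).
If `Σ_k c (k+1) • Z^k` converges (with sum `F1`), then `Σ_k c k • p k` converges and
`Σ_k c k • p k = [I O]·F1·[A; A² − D] + c 0 • I`. -/
theorem nbt_series_closed_form
    {n : ℕ} (G : SimpleGraph (Fin n)) [DecidableRel G.Adj]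
    (A D : Matrix (Fin n) (Fin n) ℝ)
    (hA : A = G.adjMatrix ℝ)
    (hD : D = Matrix.diagonal (A *ᵥ fun _ => (1 : ℝ)))
    (p : ℕ → Matrix (Fin n) (Fin n) ℝ)
    (hp0 : p 0 = 1) (hp1 : p 1 = A) (hp2 : p 2 = A ^ 2 - D)
    (hprec : ∀ k, 3 ≤ k →
      p k = A * p (k - 1) + ((1 : Matrix (Fin n) (Fin n) ℝ) - D) * p (k - 2))
    (Z : Matrix (Fin n ⊕ Fin n) (Fin n ⊕ Fin n) ℝ)
    (hZ : Z = Matrix.fromBlocks 0 1 ((1 : Matrix (Fin n) (Fin n) ℝ) - D) A)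
    (c : ℕ → ℝ)
    (F1 : Matrix (Fin n ⊕ Fin n) (Fin n ⊕ Fin n) ℝ)
    (hF1 : HasSum (fun k => c (k + 1) • Z ^ k) F1) :
    Summable (fun k => c k • p k) ∧
    (∑' k, c k • p k) =
      Matrix.fromCols (1 : Matrix (Fin n) (Fin n) ℝ) (0 : Matrix (Fin n) (Fin n) ℝ) * F1 *
          Matrix.fromRows A (A ^ 2 - D)
        + c 0 • (1 : Matrix (Fin n) (Fin n) ℝ) := by
  set U : Matrix (Fin n) (Fin n ⊕ Fin n) ℝ := Matrix.fromCols 1 0 with hU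
  set V : Matrix (Fin n ⊕ Fin n) (Fin n) ℝ := Matrix.fromRows A (A ^ 2 - D) with hV
  -- key: Z^k * V = fromRows (p (k+1)) (p (k+2))
  have key : ∀ k : ℕ, Z ^ k * V = Matrix.fromRows (p (k + 1)) (p (k + 2)) := by
    intro k
    induction k with
    | zero => simp [hV, hp1, hp2]
    | succ k ih =>
      have hrec : p (k + 3) = A * p (k + 2) + (1 - D) * p (k + 1) := by
        have := hprec (k + 3) (by omega)
        simpa using this
      rw [pow_succ', Matrix.mul_assoc, ih, hZ, Matrix.fromBlocks_mul_fromRows]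
      show Matrix.fromRows (0 * p (k + 1) + 1 * p (k + 2))
          ((1 - D) * p (k + 1) + A * p (k + 2)) = Matrix.fromRows (p (k + 2)) (p (k + 3))
      rw [hrec, add_comm ((1 - D) * p (k + 1))]
      simp
  have hp' : ∀ k : ℕ, p (k + 1) = U * (Z ^ k) * V := by
    intro k
    rw [Matrix.mul_assoc, key k, hU, Matrix.fromCols_mul_fromRows]
    simp
  -- map the HasSum through X ↦ U * X * V
  let L : Matrix (Fin n ⊕ Fin n) (Fin n ⊕ Fin n) ℝ →+ Matrix (Fin n) (Fin n) ℝ :=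
    { toFun := fun X => U * X * V
      map_zero' := by simp
      map_add' := by intro X Y; simp only [Matrix.mul_add, Matrix.add_mul] }
  have hLcont : Continuous L := by
    show Continuous fun (X : Matrix (Fin n ⊕ Fin n) (Fin n ⊕ Fin n) ℝ) => U * X * V
    exact (continuous_const.matrix_mul continuous_id).matrix_mul continuous_const
  have hsum1 : HasSum (fun k => c (k + 1) • p (k + 1)) (U * F1 * V) := by
    have hm := hF1.map L hLcont
    simp only [Function.comp_def] at hm
    have heq : (fun k => L (c (k + 1) • Z ^ k)) = fun k => c (k + 1) • p (k + 1) := by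
      funext k
      show U * (c (k + 1) • Z ^ k) * V = c (k + 1) • p (k + 1)
      rw [hp' k, Matrix.mul_smul, Matrix.smul_mul]
    rwa [heq] at hm
  have hsummable : Summable (fun k => c k • p k) :=
    (summable_nat_add_iff 1).mp hsum1.summable
  refine ⟨hsummable, ?_⟩
  have := Summable.tsum_eq_zero_add hsummable
  rw [this, hsum1.tsum_eq, hp0]
  rw [add_comm]
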